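/- Let {A_ξ : ξ < λ} be a family of mad families on ℕ such that A_η refines A_ξ whenever ξ ≤ η < λ. Then there is no mad family B refining every A_ξ if and only if the set of infinite b ⊆ ℕ intersecting the family is not dense in ([ω]^ω, ⊆*), i.e., there exists an infinite ā ⊆ ℕ such that no infinite b ⊆* ā intersects the family. -/

import Mathlib

/-- `b ⊆* a`: `b \ a` is finite. -/
def AlmostSubset (b a : Set ℕ) : Prop := (b \ a).Finite

/-- A mad family on ℕ: a maximal almost disjoint family of infinite subsets of ℕ. -/
def IsMadFamily (A : Set (Set ℕ)) : Prop :=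
  (∀ a ∈ A, a.Infinite) ∧
  (A.Pairwise fun a a' => (a ∩ a').Finite) ∧
  (∀ b : Set ℕ, b.Infinite → ∃ a ∈ A, (b ∩ a).Infinite)

/-- `B` refines `A`: every element of `B` is almost included in some element of `A`. -/
def Refines (B A : Set (Set ℕ)) : Prop := ∀ b ∈ B, ∃ a ∈ A, AlmostSubset b a

/-- A distributivity matrix of height `lam`: a refining system of mad families
indexed by the ordinals below `lam`, without common (mad) refinement. -/
def IsDistribMatrix (lam : Ordinal) (A : Ordinal → Set (Set ℕ)) : Prop :=
  (∀ ξ < lam, IsMadFamily (A ξ)) ∧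
  (∀ ξ η : Ordinal, ξ ≤ η → η < lam → Refines (A η) (A ξ)) ∧
  ¬ ∃ B : Set (Set ℕ), IsMadFamily B ∧ ∀ ξ < lam, Refines B (A ξ)


/-- `b` intersects the family `{A ξ : ξ < lam}`: for each `ξ < lam` there is
`a ∈ A ξ` with `b ⊆* a`. -/
def Intersects (lam : Ordinal) (A : Ordinal → Set (Set ℕ)) (b : Set ℕ) : Prop :=
  ∀ ξ < lam, ∃ a ∈ A ξ, AlmostSubset b a

lemma almostSubset_mono {b' b a : Set ℕ} (h : b' ⊆ b) (hba : AlmostSubset b a) :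
    AlmostSubset b' a :=
  hba.subset (Set.diff_subset_diff_left h)

lemma intersects_mono {lam A} {b' b : Set ℕ} (h : b' ⊆ b) (hb : Intersects lam A b) :
    Intersects lam A b' := by
  intro ξ hξ
  obtain ⟨a, ha, hba⟩ := hb ξ hξ
  exact ⟨a, ha, almostSubset_mono h hba⟩

/-- For a refining system of mad families, there is no common mad refinement iff
the set of infinite sets intersecting the family is not dense in `([ω]^ω, ⊆*)`,
i.e. there is an infinite `ā` such that no infinite `b ⊆* ā` intersects the family. -/
theorem no_refinement_iff_not_dense (lam : Ordinal) (A : Ordinal → Set (Set ℕ))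
    (hmad : ∀ ξ < lam, IsMadFamily (A ξ))
    (href : ∀ ξ η : Ordinal, ξ ≤ η → η < lam → Refines (A η) (A ξ)) :
    (¬ ∃ B : Set (Set ℕ), IsMadFamily B ∧ ∀ ξ < lam, Refines B (A ξ)) ↔
      (∃ abar : Set ℕ, abar.Infinite ∧
        ∀ b : Set ℕ, b.Infinite → AlmostSubset b abar → ¬ Intersects lam A b) := by
  constructor
  · -- no refinement → not dense
    intro hno
    by_contra hdense
    push_neg at hdense
    -- hdense : ∀ abar, abar.Infinite → ∃ b, b.Infinite ∧ AlmostSubset b abar ∧ Intersects lam A b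
    apply hno
    -- D : the set of infinite sets intersecting the family
    set D : Set (Set ℕ) := {b | b.Infinite ∧ Intersects lam A b} with hD
    set S : Set (Set (Set ℕ)) :=
      {C | C ⊆ D ∧ C.Pairwise fun a a' => (a ∩ a').Finite} with hS
    obtain ⟨m, hm⟩ : ∃ m, Maximal (· ∈ S) m := by
      apply zorn_subset
      intro c hcS hchain
      refine ⟨⋃₀ c, ⟨?_, ?_⟩, fun s hs => Set.subset_sUnion_of_mem hs⟩
      · intro b hb
        obtain ⟨C, hC, hbC⟩ := hb
        exact (hcS hC).1 hbC
      · intro a ha b hb hab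
        obtain ⟨Ca, hCa, haC⟩ := ha
        obtain ⟨Cb, hCb, hbC⟩ := hb
        rcases hchain.total hCa hCb with h | h
        · exact (hcS hCb).2 (h haC) hbC hab
        · exact (hcS hCa).2 haC (h hbC) hab
    refine ⟨m, ⟨fun a ha => (hm.prop.1 ha).1, hm.prop.2, ?_⟩, ?_⟩
    · -- maximality: m is mad
      intro c hc
      by_contra hcon
      push_neg at hcon
      -- hcon : ∀ a ∈ m, ¬(c ∩ a).Infinite
      obtain ⟨b, hbinf, hbc, hbint⟩ := hdense c hc
      have hb'' : (b ∩ c).Infinite := by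
        have : b ⊆ (b ∩ c) ∪ (b \ c) := by
          intro x hx
          by_cases hxc : x ∈ c
          · exact Or.inl ⟨hx, hxc⟩
          · exact Or.inr ⟨hx, hxc⟩
        by_contra hfin
        rw [Set.not_infinite] at hfin
        exact hbinf ((hfin.union hbc).subset this)
      have hb''D : b ∩ c ∈ D :=
        ⟨hb'', intersects_mono Set.inter_subset_left hbint⟩
      have hnotmem : b ∩ c ∉ m := by
        intro hmem
        exact (by rwa [Set.inter_comm c (b ∩ c),
          Set.inter_eq_left.2 Set.inter_subset_right] : (c ∩ (b ∩ c)).Infinite) (hcon _ hmem)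
      have hins : insert (b ∩ c) m ∈ S := by
        constructor
        · exact Set.insert_subset hb''D hm.prop.1
        · haveI : Std.Symm (fun a a' : Set ℕ => (a ∩ a').Finite) :=
            ⟨fun a a' h => by rwa [Set.inter_comm] at h⟩
          rw [Set.pairwise_insert_of_symm]
          refine ⟨hm.prop.2, fun a ha _ => ?_⟩
          have : (b ∩ c) ∩ a ⊆ c ∩ a :=
            Set.inter_subset_inter_left a Set.inter_subset_right
          have := (hcon a ha).subset this
          exact this
      have := hm.2 hins (Set.subset_insert _ _)
      exact hnotmem (this (Set.mem_insert _ _))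
    · -- m refines every A ξ
      intro ξ hξ b hb
      exact (hm.prop.1 hb).2 ξ hξ
  · -- not dense → no refinement
    rintro ⟨abar, habar, hbad⟩ ⟨B, hBmad, hBref⟩
    obtain ⟨b, hbB, hbinf⟩ := hBmad.2.2 abar habar
    refine hbad (b ∩ abar) (by rwa [Set.inter_comm] at hbinf) ?_ ?_
    · show ((b ∩ abar) \ abar).Finite
      simp [Set.diff_eq, Set.inter_assoc]
    · intro ξ hξ
      obtain ⟨a, ha, hba⟩ := hBref ξ hξ b hbB
      exact ⟨a, ha, almostSubset_mono Set.inter_subset_left hba⟩
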